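/- Fix n, m > 0 and 0 < a₁ < a₂, and let p_{a_i} be the density of Beta(n·a_i, m·a_i). Then the ratio t(x) = p_{a₁}(x)/p_{a₂}(x) satisfies t(x) = K · x^(-n(a₂-a₁)) · (1-x)^(-m(a₂-a₁)) for some constant K > 0, is strictly convex on (0,1), and t(x) → ∞ as x → 0⁺ and x → 1⁻. -/

import Mathlib

open Set Filter MeasureTheory Real

lemma betaInt_pos {u v : ℝ} (hu : 0 < u) (hv : 0 < v) :
    0 < ∫ t in (0:ℝ)..1, t ^ (u-1) * (1-t) ^ (v-1) := by
  have hC := Complex.betaIntegral_convergent (u := (u:ℂ)) (v := (v:ℂ)) (by simpa) (by simpa)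
  have hInt : IntervalIntegrable (fun t : ℝ => t ^ (u-1) * (1-t) ^ (v-1)) volume 0 1 := by
    rw [intervalIntegrable_iff_integrableOn_Ioc_of_le zero_le_one] at hC ⊢
    have hre : IntegrableOn (fun x : ℝ =>
        RCLike.re ((x:ℂ) ^ ((u:ℂ) - 1) * ((1:ℂ) - (x:ℂ)) ^ ((v:ℂ) - 1))) (Set.Ioc 0 1) volume :=
      hC.re
    refine hre.congr_fun (fun x hx => ?_) measurableSet_Ioc
    have hx0 : (0:ℝ) ≤ x := hx.1.le
    have hx1 : (0:ℝ) ≤ 1 - x := by linarith [hx.2]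
    have h1 : (x:ℂ) ^ ((u:ℂ) - 1) = ((x ^ (u-1) : ℝ) : ℂ) := by
      rw [Complex.ofReal_cpow hx0]; push_cast; ring_nf
    have h2 : ((1:ℂ) - (x:ℂ)) ^ ((v:ℂ) - 1) = (((1 - x) ^ (v-1) : ℝ) : ℂ) := by
      rw [Complex.ofReal_cpow hx1]; push_cast; ring_nf
    simp only [RCLike.re_to_complex, h1, h2, ← Complex.ofReal_mul, Complex.ofReal_re]
  refine intervalIntegral.intervalIntegral_pos_of_pos_on hInt (fun x hx => ?_) zero_lt_one
  exact mul_pos (rpow_pos_of_pos hx.1 _) (rpow_pos_of_pos (by linarith [hx.2]) _)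

lemma strictConvexOn_exp_comp {s : Set ℝ} {f : ℝ → ℝ} (hf : StrictConvexOn ℝ s f) :
    StrictConvexOn ℝ s (fun x => Real.exp (f x)) := by
  refine ⟨hf.1, fun x hx y hy hxy a b ha hb hab => ?_⟩
  have h1 := hf.2 hx hy hxy ha hb hab
  have h2 : Real.exp (a • f x + b • f y) ≤ a • Real.exp (f x) + b • Real.exp (f y) :=
    convexOn_exp.2 (Set.mem_univ _) (Set.mem_univ _) ha.le hb.le hab
  exact lt_of_lt_of_le (Real.exp_lt_exp.2 h1) h2

lemma strictConvexOn_congr {s : Set ℝ} {f g : ℝ → ℝ} (hf : StrictConvexOn ℝ s f)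
    (h : Set.EqOn f g s) : StrictConvexOn ℝ s g := by
  refine ⟨hf.1, fun x hx y hy hxy a b ha hb hab => ?_⟩
  rw [← h hx, ← h hy, ← h (hf.1 hx hy ha.le hb.le hab)]
  exact hf.2 hx hy hxy ha hb hab

lemma rpow_neg_tendsto {c : ℝ} (hc : 0 < c) :
    Tendsto (fun x : ℝ => x ^ (-c)) (nhdsWithin 0 (Set.Ioi 0)) atTop := by
  have hA : Tendsto (fun x : ℝ => x ^ c) (nhdsWithin 0 (Set.Ioi 0)) (nhdsWithin 0 (Set.Ioi 0)) := by
    apply tendsto_nhdsWithin_of_tendsto_nhds_of_eventually_within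
    · have := (Real.continuousAt_rpow_const 0 c (Or.inr hc.le)).tendsto
      rw [Real.zero_rpow hc.ne'] at this
      exact this.mono_left nhdsWithin_le_nhds
    · exact Filter.eventually_of_mem self_mem_nhdsWithin
        (fun x hx => Real.rpow_pos_of_pos hx c)
  refine (hA.inv_tendsto_nhdsGT_zero).congr' ?_
  exact Filter.eventuallyEq_of_mem self_mem_nhdsWithin
    (fun x hx => by simp [Real.rpow_neg (le_of_lt hx)])


/-- The ratio of two Beta(na_i, ma_i) densities is K·x^(-n(a₂-a₁))·(1-x)^(-m(a₂-a₁)),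
strictly convex on (0,1), tending to ∞ at both endpoints. -/
theorem stmt_8 (n m a₁ a₂ : ℝ) (hn : 0 < n) (hm : 0 < m)
    (ha₁ : 0 < a₁) (ha : a₁ < a₂)
    (p : ℝ → ℝ → ℝ)
    (hp : ∀ a, ∀ x, p a x = x ^ (n*a - 1) * (1 - x) ^ (m*a - 1)
        / (∫ t in (0:ℝ)..1, t ^ (n*a - 1) * (1 - t) ^ (m*a - 1))) :
    (∃ K : ℝ, 0 < K ∧ ∀ x ∈ Set.Ioo (0:ℝ) 1,
      p a₁ x / p a₂ x = K * x ^ (-(n*(a₂-a₁))) * (1 - x) ^ (-(m*(a₂-a₁)))) ∧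
    StrictConvexOn ℝ (Set.Ioo (0:ℝ) 1) (fun x => p a₁ x / p a₂ x) ∧
    Filter.Tendsto (fun x => p a₁ x / p a₂ x) (nhdsWithin 0 (Set.Ioi 0)) Filter.atTop ∧
    Filter.Tendsto (fun x => p a₁ x / p a₂ x) (nhdsWithin 1 (Set.Iio 1)) Filter.atTop := by
  have ha₂ : 0 < a₂ := ha₁.trans ha
  have hsub : 0 < a₂ - a₁ := sub_pos.2 ha
  have hc : 0 < n*(a₂-a₁) := mul_pos hn hsub
  have hd : 0 < m*(a₂-a₁) := mul_pos hm hsub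
  have hB₁ : 0 < ∫ t in (0:ℝ)..1, t ^ (n*a₁ - 1) * (1-t) ^ (m*a₁ - 1) :=
    betaInt_pos (mul_pos hn ha₁) (mul_pos hm ha₁)
  have hB₂ : 0 < ∫ t in (0:ℝ)..1, t ^ (n*a₂ - 1) * (1-t) ^ (m*a₂ - 1) :=
    betaInt_pos (mul_pos hn ha₂) (mul_pos hm ha₂)
  set K : ℝ := (∫ t in (0:ℝ)..1, t ^ (n*a₂ - 1) * (1-t) ^ (m*a₂ - 1)) /
      (∫ t in (0:ℝ)..1, t ^ (n*a₁ - 1) * (1-t) ^ (m*a₁ - 1)) with hKdef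
  have hKpos : 0 < K := div_pos hB₂ hB₁
  have hK : ∀ x ∈ Set.Ioo (0:ℝ) 1,
      p a₁ x / p a₂ x = K * x ^ (-(n*(a₂-a₁))) * (1 - x) ^ (-(m*(a₂-a₁))) := by
    intro x hx
    have hx0 : 0 < x := hx.1
    have hx1 : 0 < 1 - x := by linarith [hx.2]
    have e1 : x ^ (-(n*(a₂-a₁))) = x ^ (n*a₁ - 1) / x ^ (n*a₂ - 1) := by
      rw [← Real.rpow_sub hx0]; congr 1; ring
    have e2 : (1-x) ^ (-(m*(a₂-a₁))) = (1-x) ^ (m*a₁ - 1) / (1-x) ^ (m*a₂ - 1) := by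
      rw [← Real.rpow_sub hx1]; congr 1; ring
    have h1 := (Real.rpow_pos_of_pos hx0 (n*a₂-1)).ne'
    have h2 := (Real.rpow_pos_of_pos hx1 (m*a₂-1)).ne'
    have h3 := hB₁.ne'
    have h4 := hB₂.ne'
    rw [hp a₁ x, hp a₂ x, e1, e2, hKdef]
    field_simp
  refine ⟨⟨K, hKpos, hK⟩, ?_, ?_, ?_⟩
  · -- strict convexity
    have slog : StrictConcaveOn ℝ (Set.Ioo (0:ℝ) 1) Real.log :=
      strictConcaveOn_log_Ioi.subset (fun x hx => hx.1) (convex_Ioo 0 1)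
    have hA : StrictConvexOn ℝ (Set.Ioo (0:ℝ) 1)
        (fun x => -((n*(a₂-a₁)) * Real.log x)) := by
      refine ⟨convex_Ioo 0 1, fun x hx y hy hxy a b hha hhb hhab => ?_⟩
      have hlt := slog.2 hx hy hxy hha hhb hhab
      simp only [smul_eq_mul] at *
      nlinarith [hc]
    have hBc : StrictConvexOn ℝ (Set.Ioo (0:ℝ) 1)
        (fun x => -((m*(a₂-a₁)) * Real.log (1 - x))) := by
      refine ⟨convex_Ioo 0 1, fun x hx y hy hxy a b hha hhb hhab => ?_⟩
      have hx' : 1 - x ∈ Set.Ioo (0:ℝ) 1 := ⟨by linarith [hx.2], by linarith [hx.1]⟩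
      have hy' : 1 - y ∈ Set.Ioo (0:ℝ) 1 := ⟨by linarith [hy.2], by linarith [hy.1]⟩
      have hne : 1 - x ≠ 1 - y := fun h => hxy (by linarith)
      have hlt := slog.2 hx' hy' hne hha hhb hhab
      simp only [smul_eq_mul] at *
      have hcomb : 1 - (a*x + b*y) = a*(1-x) + b*(1-y) := by linear_combination -hhab
      rw [hcomb]
      nlinarith [hd]
    have hF := strictConvexOn_exp_comp (((hA.add hBc).add_const (Real.log K)))
    refine strictConvexOn_congr hF (fun x hx => ?_)
    have hx0 : 0 < x := hx.1
    have hx1 : 0 < 1 - x := by linarith [hx.2]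
    show Real.exp _ = p a₁ x / p a₂ x
    rw [hK x hx]
    simp only [Pi.add_apply]
    rw [Real.exp_add, Real.exp_add, Real.exp_log hKpos,
      Real.rpow_def_of_pos hx0, Real.rpow_def_of_pos hx1,
      show -((n*(a₂-a₁)) * Real.log x) = Real.log x * (-(n*(a₂-a₁))) by ring,
      show -((m*(a₂-a₁)) * Real.log (1-x)) = Real.log (1-x) * (-(m*(a₂-a₁))) by ring]
    ring
  · -- limit at 0
    have hmem0 : Set.Ioo (0:ℝ) 1 ∈ nhdsWithin (0:ℝ) (Set.Ioi 0) :=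
      Ioo_mem_nhdsGT_of_mem ⟨le_refl 0, zero_lt_one⟩
    have hg : Tendsto (fun x : ℝ => (1-x) ^ (-(m*(a₂-a₁)))) (nhdsWithin 0 (Set.Ioi 0))
        (nhds 1) := by
      have hcont : ContinuousAt (fun x : ℝ => (1-x) ^ (-(m*(a₂-a₁)))) 0 :=
        ContinuousAt.rpow_const ((continuous_const.sub continuous_id).continuousAt)
          (Or.inl (by norm_num))
      have ht := hcont.tendsto
      simp only [sub_zero, Real.one_rpow] at ht
      exact ht.mono_left nhdsWithin_le_nhds
    have hf := ((rpow_neg_tendsto hc).const_mul_atTop hKpos).atTop_mul_pos zero_lt_one hg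
    refine hf.congr' ?_
    exact Filter.eventuallyEq_of_mem hmem0 (fun x hx => (hK x hx).symm)
  · -- limit at 1
    have hmem1 : Set.Ioo (0:ℝ) 1 ∈ nhdsWithin (1:ℝ) (Set.Iio 1) :=
      Ioo_mem_nhdsLT_of_mem ⟨zero_lt_one, le_refl 1⟩
    have hmap : Tendsto (fun x : ℝ => 1 - x) (nhdsWithin 1 (Set.Iio 1))
        (nhdsWithin 0 (Set.Ioi 0)) := by
      apply tendsto_nhdsWithin_of_tendsto_nhds_of_eventually_within
      · have ht : Tendsto (fun x : ℝ => 1 - x) (nhds 1) (nhds (1 - 1)) :=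
          ((continuous_const.sub continuous_id).tendsto 1)
        rw [sub_self] at ht
        exact ht.mono_left nhdsWithin_le_nhds
      · exact Filter.eventually_of_mem self_mem_nhdsWithin
          (fun x (hx : x < 1) => sub_pos.2 hx)
    have hT : Tendsto (fun x : ℝ => (1-x) ^ (-(m*(a₂-a₁)))) (nhdsWithin 1 (Set.Iio 1))
        atTop := (rpow_neg_tendsto hd).comp hmap
    have hg2 : Tendsto (fun x : ℝ => K * x ^ (-(n*(a₂-a₁)))) (nhdsWithin 1 (Set.Iio 1))
        (nhds K) := by
      have hcont : ContinuousAt (fun x : ℝ => K * x ^ (-(n*(a₂-a₁)))) 1 :=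
        (continuousAt_const).mul
          (ContinuousAt.rpow_const continuousAt_id (Or.inl one_ne_zero))
      have ht := hcont.tendsto
      simp only [Real.one_rpow, mul_one] at ht
      exact ht.mono_left nhdsWithin_le_nhds
    have hf := hT.atTop_mul_pos hKpos hg2
    refine hf.congr' ?_
    exact Filter.eventuallyEq_of_mem hmem1 (fun x hx => by rw [hK x hx]; ring)
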